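/- Let f : [0,1]^n → [0,1] be any function obtained from the coordinate projections by pointwise application of ¬x = 1-x and x ⊕ y = min(1, x+y). Then for every point v ∈ [0,1]^n and every unit vector u ∈ ℝ^n such that v + εu ∈ [0,1]^n for all sufficiently small ε > 0, the one-sided directional derivative ∂f(v)/∂u = lim_{ε→0+} (f(v+εu) - f(v))/ε exists. -/

import Mathlib

open Filter Topology Set

noncomputable section

/-- Functions `[0,1]^n → [0,1]` generated from coordinate projections by the
Łukasiewicz operations `¬x = 1 - x` and `x ⊕ y = min 1 (x + y)`. -/
inductive Luk (n : ℕ) : ((Fin n → ℝ) → ℝ) → Prop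
  | proj (i : Fin n) : Luk n (fun x => x i)
  | neg {f : (Fin n → ℝ) → ℝ} : Luk n f → Luk n (fun x => 1 - f x)
  | oplus {f g : (Fin n → ℝ) → ℝ} : Luk n f → Luk n g →
      Luk n (fun x => min 1 (f x + g x))

/-- The unit cube `[0,1]^n`. -/
def cube (n : ℕ) : Set (Fin n → ℝ) := {x | ∀ i, x i ∈ Set.Icc (0:ℝ) 1}


/-- Euclidean dot product on `ℝ^n`. -/
def dot {n : ℕ} (u v : Fin n → ℝ) : ℝ := ∑ k, u k * v k

/-- Along a ray, a Łukasiewicz function is eventually affine near `ε = 0⁺`. -/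
theorem luk_eventually_affine {n : ℕ} {f : (Fin n → ℝ) → ℝ} (hf : Luk n f)
    (v u : Fin n → ℝ) :
    ∃ L : ℝ, ∀ᶠ ε : ℝ in nhdsWithin 0 (Set.Ioi 0),
      f (v + ε • u) = f v + ε * L := by
  induction hf with
  | proj i =>
      exact ⟨u i, Filter.Eventually.of_forall fun ε => by
        simp [Pi.add_apply, Pi.smul_apply, smul_eq_mul]⟩
  | neg hf ih =>
      obtain ⟨L, hL⟩ := ih
      refine ⟨-L, ?_⟩
      filter_upwards [hL] with ε h
      rw [h]; ring
  | @oplus f g hf hg ihf ihg =>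
      obtain ⟨L₁, h₁⟩ := ihf
      obtain ⟨L₂, h₂⟩ := ihg
      rcases lt_trichotomy (f v + g v) 1 with hs | hs | hs
      · refine ⟨L₁ + L₂, ?_⟩
        have htend : Filter.Tendsto (fun ε : ℝ => f v + g v + ε * (L₁ + L₂))
            (nhdsWithin 0 (Set.Ioi 0)) (nhds (f v + g v)) := by
          have : Filter.Tendsto (fun ε : ℝ => f v + g v + ε * (L₁ + L₂))
              (nhds 0) (nhds (f v + g v + 0 * (L₁ + L₂))) := by
            exact (continuous_const.add (continuous_id.mul continuous_const)).tendsto 0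
          simpa using this.mono_left nhdsWithin_le_nhds
        have hev := htend.eventually_lt_const hs
        filter_upwards [h₁, h₂, hev] with ε e₁ e₂ elt
        rw [e₁, e₂]
        rw [min_eq_right hs.le, min_eq_right]
        · ring
        · linarith [elt]
      · refine ⟨min (L₁ + L₂) 0, ?_⟩
        filter_upwards [h₁, h₂, self_mem_nhdsWithin] with ε e₁ e₂ (hε : 0 < ε)
        rw [e₁, e₂, hs]
        rcases le_or_gt 0 (L₁ + L₂) with h | h
        · rw [min_eq_right h, min_eq_left (by nlinarith), min_eq_left (by nlinarith)]
          ring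
        · rw [min_eq_left h.le, min_eq_right (by nlinarith), min_eq_left le_rfl]
          linarith
      · refine ⟨0, ?_⟩
        have htend : Filter.Tendsto (fun ε : ℝ => f v + g v + ε * (L₁ + L₂))
            (nhdsWithin 0 (Set.Ioi 0)) (nhds (f v + g v)) := by
          have : Filter.Tendsto (fun ε : ℝ => f v + g v + ε * (L₁ + L₂))
              (nhds 0) (nhds (f v + g v + 0 * (L₁ + L₂))) := by
            exact (continuous_const.add (continuous_id.mul continuous_const)).tendsto 0
          simpa using this.mono_left nhdsWithin_le_nhds
        have hev := htend.eventually_const_lt hs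
        filter_upwards [h₁, h₂, hev] with ε e₁ e₂ elt
        rw [e₁, e₂]
        rw [min_eq_left hs.le, min_eq_left]
        · ring
        · linarith [elt]

/-- one-sided directional derivatives of truth functions exist. -/
theorem luk_dirDeriv_exists {n : ℕ} (f : (Fin n → ℝ) → ℝ) (hf : Luk n f)
    (v : Fin n → ℝ) (hv : v ∈ cube n) (u : Fin n → ℝ) (hu : dot u u = 1)
    (hcube : ∃ ε₀ > (0:ℝ), ∀ ε : ℝ, 0 < ε → ε ≤ ε₀ → v + ε • u ∈ cube n) :
    ∃ L : ℝ, Filter.Tendsto (fun ε : ℝ => (f (v + ε • u) - f v) / ε)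
      (nhdsWithin 0 (Set.Ioi 0)) (nhds L) := by
  obtain ⟨L, hL⟩ := luk_eventually_affine hf v u
  refine ⟨L, tendsto_const_nhds.congr' ?_⟩
  filter_upwards [hL, self_mem_nhdsWithin] with ε h (hε : 0 < ε)
  rw [h]
  field_simp
  ring
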